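/- arXiv:2308.13186 — 3 statements merged into one kernel-verified Lean document; each statement's English description precedes it below -/
import Mathlib

section
/- Every element c ∈ R with Kdim(R/cR) < m is regular in R, i.e., c is a non-zero-divisor. -/
set_option linter.unusedVariables false

/-- `devLE k A` : the deviation (in the Gabriel–Rentschler sense) of the
poset `A` is `≤ k` (for `k : ℕ`).  `devLE 0 A` says every descending chain
eventually stabilizes (DCC), and `devLE (k+1) A` says that in any descending
chain all but finitely many of the factor intervals have deviation `≤ k`. -/
def devLE : ℕ → (A : Type*) → [inst : Preorder A] → Prop
  | 0, A, _ => ∀ f : ℕ → A, Antitone f → ∃ N, ∀ i, N ≤ i → f (i + 1) = f i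
  | (k+1), A, _ => ∀ f : ℕ → A, Antitone f →
      ∃ N, ∀ i, N ≤ i → devLE k (Set.Icc (f (i + 1)) (f i))

/-- The Gabriel–Rentschler Krull dimension of the right `R`-module `M`
(a module over `Rᵐᵒᵖ`) is `≤ k` : the deviation of its submodule lattice is `≤ k`. -/
def kdimLE (R M : Type*) [Ring R] [AddCommGroup M] [Module Rᵐᵒᵖ M] (k : ℕ) : Prop :=
  devLE k (Submodule Rᵐᵒᵖ M)

/-- `c` is a regular element of `R` (neither a left nor a right zero divisor). -/
def regElem (R : Type*) [Ring R] (c : R) : Prop :=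
  (∀ x : R, c * x = 0 → x = 0) ∧ (∀ x : R, x * c = 0 → x = 0)

/-- `C_m = {c ∈ R | Kdim(R/cR) < m}` (for `0 < m`, `Kdim < m` is `Kdim ≤ m-1`). -/
def rCm (R : Type*) [Ring R] (m : ℕ) : Set R :=
  {c | kdimLE R (R ⧸ Submodule.span Rᵐᵒᵖ ({c} : Set R)) (m - 1)}

/-- The m-Gabriel filter `g = {right ideals I | Kdim(R/I) < m}`. -/
def gFilt (R : Type*) [Ring R] (m : ℕ) : Set (Submodule Rᵐᵒᵖ R) :=
  {I | kdimLE R (R ⧸ I) (m - 1)}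

/-- A right ideal `P` is a (two-sided) prime ideal of `R`. -/
def isTwoSidedPrime (R : Type*) [Ring R] (P : Submodule Rᵐᵒᵖ R) : Prop :=
  (∀ a ∈ P, ∀ r : R, r * a ∈ P) ∧ P ≠ ⊤ ∧
    ∀ a b : R, (∀ r : R, a * r * b ∈ P) → a ∈ P ∨ b ∈ P

/-- `c ∈ C(P)` : `c` is regular modulo `P`. -/
def regModP (R : Type*) [Ring R] (P : Submodule Rᵐᵒᵖ R) (c : R) : Prop :=
  ∀ x : R, (c * x ∈ P → x ∈ P) ∧ (x * c ∈ P → x ∈ P)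

/-- `X_m` : the set of (two-sided) prime ideals `P` with `Kdim(R/P) = m`. -/
def xSet (R : Type*) [Ring R] (m : ℕ) : Set (Submodule Rᵐᵒᵖ R) :=
  {P | isTwoSidedPrime R P ∧ kdimLE R (R ⧸ P) m ∧ ¬ kdimLE R (R ⧸ P) (m - 1)}

/-- `V_m = ⋂_{P ∈ X_m} C(P)`. -/
def vSet (R : Type*) [Ring R] (m : ℕ) : Set R :=
  {v | ∀ P ∈ xSet R m, regModP R P v}

/-- Left multiplication by `a` as a right-module (`Rᵐᵒᵖ`-module) endomorphism of `R`. -/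
def lmulHom (R : Type*) [Ring R] (a : R) : R →ₗ[Rᵐᵒᵖ] R where
  toFun x := a * x
  map_add' x y := mul_add a x y
  map_smul' r x := by
    simp [MulOpposite.smul_eq_mul_unop, mul_assoc]

/-- `Q` is a classical right quotient ring of `R` via `f : R →+* Q` :
`f` is injective, regular elements of `R` become units in `Q`, and every
element of `Q` is a right fraction `f a * (f s)⁻¹`. -/
def isRightQuotientRing (R Q : Type*) [Ring R] [Ring Q] (f : R →+* Q) : Prop :=
  Function.Injective f ∧ (∀ s : R, regElem R s → IsUnit (f s)) ∧
    ∀ q : Q, ∃ a s : R, regElem R s ∧ q * f s = f a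

/-- `R^e = {q ∈ Q | qJ ⊆ R for some J in the m-Gabriel filter}`, as a subset of `Q`. -/
def reSet (R Q : Type*) [Ring R] [Ring Q] (f : R →+* Q) (m : ℕ) : Set Q :=
  {q | ∃ J ∈ gFilt R m, ∀ j ∈ J, ∃ r : R, q * f j = f r}

/-- The extension `A·R^e` of a set `A ⊆ R` : the additive subgroup of `Q`
generated by products `f a * q` with `a ∈ A`, `q ∈ R^e` (a right ideal of `R^e`). -/
def extSet (R Q : Type*) [Ring R] [Ring Q] (f : R →+* Q) (m : ℕ) (A : Set R) : Set Q :=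
  (AddSubgroup.closure {x : Q | ∃ a ∈ A, ∃ q ∈ reSet R Q f m, x = f a * q} : Set Q)

/-- The right `R`-module structure on `Q` induced by `f : R →+* Q`. -/
def qMod (R Q : Type*) [Ring R] [Ring Q] (f : R →+* Q) : Module Rᵐᵒᵖ Q :=
  Module.compHom Q (RingHom.op f)

set_option maxHeartbeats 1000000

theorem devLE_transfer {A B : Type*} [Preorder A] [Preorder B] (k : ℕ) (g : A → B)
    (hmono : Monotone g) (hinj : ∀ x y : A, x ≤ y → g x = g y → x = y) :
    devLE k B → devLE k A := by
  induction k generalizing A B with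
  | zero =>
    intro hB f hf
    obtain ⟨N, hN⟩ := hB (g ∘ f) (hmono.comp_antitone hf)
    exact ⟨N, fun i hi => hinj _ _ (hf (Nat.le_succ i)) (hN i hi)⟩
  | succ k ih =>
    intro hB f hf
    obtain ⟨N, hN⟩ := hB (g ∘ f) (hmono.comp_antitone hf)
    refine ⟨N, fun i hi => ?_⟩
    refine ih (fun x => (⟨g x.1, hmono x.2.1, hmono x.2.2⟩ : Set.Icc (g (f (i+1))) (g (f i))))
      (fun x y hxy => hmono hxy)
      (fun x y hxy he => Subtype.ext (hinj _ _ hxy (congrArg Subtype.val he))) (hN i hi)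

theorem devLE_of_subsingleton {A : Type*} [Preorder A] [Subsingleton A] (k : ℕ) : devLE k A := by
  induction k generalizing A with
  | zero => exact fun f hf => ⟨0, fun i _ => Subsingleton.elim _ _⟩
  | succ k ih => exact fun f hf => ⟨0, fun i _ => ih⟩

theorem devLE_succ {A : Type*} [Preorder A] (k : ℕ) (h : devLE k A) : devLE (k+1) A := by
  intro f hf
  refine ⟨0, fun i _ => ?_⟩
  exact devLE_transfer k (Subtype.val) (fun x y h => h) (fun x y _ => Subtype.ext) h

theorem devLE_mono {A : Type*} [Preorder A] {k l : ℕ} (hkl : k ≤ l) (h : devLE k A) :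
    devLE l A := by
  induction l with
  | zero => exact (Nat.le_zero.mp hkl) ▸ h
  | succ l ih =>
    rcases Nat.lt_or_ge k (l+1) with h'|h'
    · exact devLE_succ l (ih (Nat.lt_succ_iff.mp h'))
    · exact (Nat.le_antisymm hkl h') ▸ h

theorem devLE_prod {A B : Type*} [Preorder A] [Preorder B] (k : ℕ)
    (hA : devLE k A) (hB : devLE k B) : devLE k (A × B) := by
  induction k generalizing A B with
  | zero =>
    intro f hf
    obtain ⟨N₁, hN₁⟩ := hA (fun i => (f i).1) (fun i j hij => (hf hij).1)
    obtain ⟨N₂, hN₂⟩ := hB (fun i => (f i).2) (fun i j hij => (hf hij).2)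
    exact ⟨max N₁ N₂, fun i hi =>
      Prod.ext (hN₁ i (le_trans (le_max_left _ _) hi)) (hN₂ i (le_trans (le_max_right _ _) hi))⟩
  | succ k ih =>
    intro f hf
    obtain ⟨N₁, hN₁⟩ := hA (fun i => (f i).1) (fun i j hij => (hf hij).1)
    obtain ⟨N₂, hN₂⟩ := hB (fun i => (f i).2) (fun i j hij => (hf hij).2)
    refine ⟨max N₁ N₂, fun i hi => ?_⟩
    have d1 := hN₁ i (le_trans (le_max_left _ _) hi)
    have d2 := hN₂ i (le_trans (le_max_right _ _) hi)
    refine devLE_transfer k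
      (fun x => ((⟨x.1.1, x.2.1.1, x.2.2.1⟩, ⟨x.1.2, x.2.1.2, x.2.2.2⟩) :
        (Set.Icc ((f (i+1)).1) ((f i).1)) × (Set.Icc ((f (i+1)).2) ((f i).2))))
      (fun x y hxy => Prod.mk_le_mk.mpr ⟨hxy.1, hxy.2⟩)
      (fun x y hxy he => Subtype.ext (Prod.ext (congrArg (fun z => z.1.val) he)
        (congrArg (fun z => z.2.val) he)))
      (ih d1 d2)

section kd
variable {R : Type} [Ring R]

theorem kdim_of_injective {M N : Type} [AddCommGroup M] [Module Rᵐᵒᵖ M] [AddCommGroup N]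
    [Module Rᵐᵒᵖ N] (f : M →ₗ[Rᵐᵒᵖ] N) (hf : Function.Injective f) (k : ℕ)
    (h : kdimLE R N k) : kdimLE R M k :=
  devLE_transfer k (Submodule.map f) (fun _ _ h => Submodule.map_mono h)
    (fun _ _ _ he => Submodule.map_injective_of_injective hf he) h

theorem kdim_of_surjective {M N : Type} [AddCommGroup M] [Module Rᵐᵒᵖ M] [AddCommGroup N]
    [Module Rᵐᵒᵖ N] (f : M →ₗ[Rᵐᵒᵖ] N) (hf : Function.Surjective f) (k : ℕ)
    (h : kdimLE R M k) : kdimLE R N k :=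
  devLE_transfer k (Submodule.comap f) (fun _ _ h => Submodule.comap_mono h)
    (fun _ _ _ he => Submodule.comap_injective_of_surjective hf he) h

theorem kdim_of_equiv {M N : Type} [AddCommGroup M] [Module Rᵐᵒᵖ M] [AddCommGroup N]
    [Module Rᵐᵒᵖ N] (f : M ≃ₗ[Rᵐᵒᵖ] N) (k : ℕ)
    (h : kdimLE R M k) : kdimLE R N k :=
  kdim_of_surjective f.toLinearMap f.surjective k h

theorem kdim_submodule {M : Type} [AddCommGroup M] [Module Rᵐᵒᵖ M] (S : Submodule Rᵐᵒᵖ M)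
    (k : ℕ) (h : kdimLE R M k) : kdimLE R S k :=
  kdim_of_injective S.subtype S.injective_subtype k h

theorem kdim_of_le {M : Type} [AddCommGroup M] [Module Rᵐᵒᵖ M] {S T : Submodule Rᵐᵒᵖ M}
    (hST : S ≤ T) (k : ℕ) (h : kdimLE R T k) : kdimLE R S k :=
  kdim_of_injective (Submodule.inclusion hST) (Submodule.inclusion_injective hST) k h

theorem kdim_ext {M : Type} [AddCommGroup M] [Module Rᵐᵒᵖ M] (N : Submodule Rᵐᵒᵖ M) (k : ℕ)
    (h1 : kdimLE R N k) (h2 : kdimLE R (M ⧸ N) k) : kdimLE R M k := by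
  refine devLE_transfer k
    (fun S => ((S.comap N.subtype, S.map N.mkQ) : Submodule Rᵐᵒᵖ N × Submodule Rᵐᵒᵖ (M ⧸ N)))
    (fun S T h => Prod.mk_le_mk.mpr ⟨Submodule.comap_mono h, Submodule.map_mono h⟩)
    (fun S T hST he => ?_) (devLE_prod k h1 h2)
  have h1' : S.comap N.subtype = T.comap N.subtype := congrArg Prod.fst he
  have h2' : S.map N.mkQ = T.map N.mkQ := congrArg Prod.snd he
  refine le_antisymm hST (fun x hxT => ?_)
  have : N.mkQ x ∈ T.map N.mkQ := Submodule.mem_map_of_mem hxT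
  rw [← h2'] at this
  obtain ⟨s, hsS, hs⟩ := this
  have hs' : (Submodule.Quotient.mk x : M ⧸ N) = Submodule.Quotient.mk s := by
    simpa [Submodule.mkQ_apply] using hs.symm
  have hxs : x - s ∈ N := (Submodule.Quotient.eq N).mp hs'
  have hxsT : x - s ∈ T := T.sub_mem hxT (hST hsS)
  have : (⟨x - s, hxs⟩ : N) ∈ T.comap N.subtype := hxsT
  rw [← h1'] at this
  have hxsS : x - s ∈ S := this
  simpa using S.add_mem hxsS hsS

end kd

section ring
variable {R : Type} [Ring R]

@[simp] theorem lmulHom_apply (a x : R) : lmulHom R a x = a * x := rfl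

theorem mul_right_mem {A : Submodule Rᵐᵒᵖ R} {a : R} (ha : a ∈ A) (r : R) : a * r ∈ A := by
  simpa [MulOpposite.smul_eq_mul_unop] using A.smul_mem (MulOpposite.op r) ha

/-- `A` is stuck : every left multiplication that doesn't kill `A` is injective on `A`. -/
def stuck (A : Submodule Rᵐᵒᵖ R) : Prop :=
  ∀ v : R, A.map (lmulHom R v) ≠ ⊥ → LinearMap.ker (lmulHom R v) ⊓ A = ⊥

theorem map_lmul_ne_bot_iff {A : Submodule Rᵐᵒᵖ R} {v : R} :
    A.map (lmulHom R v) ≠ ⊥ ↔ ∃ x ∈ A, v * x ≠ 0 := by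
  rw [Submodule.ne_bot_iff]
  constructor
  · rintro ⟨y, ⟨x, hx, rfl⟩, hy⟩
    exact ⟨x, hx, hy⟩
  · rintro ⟨x, hx, hvx⟩
    exact ⟨v * x, ⟨x, hx, rfl⟩, hvx⟩

theorem exists_u (hprime : ∀ a b : R, (∀ r : R, a * r * b = 0) → a = 0 ∨ b = 0) {A : Submodule Rᵐᵒᵖ R} (hA : A ≠ ⊥) :
    ∃ u, u ∈ A ∧ A.map (lmulHom R u) ≠ ⊥ := by
  obtain ⟨a, haA, ha⟩ := (Submodule.ne_bot_iff A).mp hA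
  have : ¬ ∀ r : R, a * r * a = 0 := fun h => by rcases hprime a a h with h'|h' <;> exact ha h'
  push_neg at this
  obtain ⟨r, hr⟩ := this
  exact ⟨a * r, mul_right_mem haA r, map_lmul_ne_bot_iff.mpr ⟨a, haA, hr⟩⟩

theorem exists_p (hprime : ∀ a b : R, (∀ r : R, a * r * b = 0) → a = 0 ∨ b = 0) {A Q : Submodule Rᵐᵒᵖ R} (hA : A ≠ ⊥) (hQ : Q ≠ ⊥) :
    ∃ p, p ∈ Q ∧ A.map (lmulHom R p) ≠ ⊥ := by
  obtain ⟨a, haA, ha⟩ := (Submodule.ne_bot_iff A).mp hA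
  obtain ⟨q, hqQ, hq⟩ := (Submodule.ne_bot_iff Q).mp hQ
  have : ¬ ∀ r : R, q * r * a = 0 := fun h => by rcases hprime q a h with h'|h' <;> [exact hq h'; exact ha h']
  push_neg at this
  obtain ⟨r, hr⟩ := this
  exact ⟨q * r, mul_right_mem hqQ r, map_lmul_ne_bot_iff.mpr ⟨a, haA, hr⟩⟩

theorem stuck_map {A : Submodule Rᵐᵒᵖ R} (hA : stuck A) (p : R) :
    stuck (A.map (lmulHom R p)) := by
  intro v hv
  have hlm : (lmulHom R v).comp (lmulHom R p) = lmulHom R (v * p) :=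
    LinearMap.ext fun x => (mul_assoc v p x).symm
  have hcomp : (A.map (lmulHom R p)).map (lmulHom R v) = A.map (lmulHom R (v * p)) := by
    rw [← Submodule.map_comp, hlm]
  have h0 : LinearMap.ker (lmulHom R (v * p)) ⊓ A = ⊥ := hA (v * p) (by rw [← hcomp]; exact hv)
  rw [eq_bot_iff]
  rintro x ⟨hxk, hxm⟩
  obtain ⟨a, haA, rfl⟩ := hxm
  have hvpa : a ∈ LinearMap.ker (lmulHom R (v * p)) ⊓ A := by
    refine ⟨?_, haA⟩
    have : v * (p * a) = 0 := hxk
    simpa [LinearMap.mem_ker, mul_assoc] using this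
  have : a = 0 := by simpa using (le_of_eq h0) hvpa
  simp [this]

theorem kdim_map {A : Submodule Rᵐᵒᵖ R} {k : ℕ} (h : kdimLE R A k) (v : R) :
    kdimLE R (A.map (lmulHom R v)) k := by
  have hr : LinearMap.range ((lmulHom R v).comp A.subtype) = A.map (lmulHom R v) := by
    rw [LinearMap.range_comp, Submodule.range_subtype]
  have h2 : kdimLE R (LinearMap.range ((lmulHom R v).comp A.subtype)) k :=
    kdim_of_surjective ((lmulHom R v).comp A.subtype).rangeRestrict
      (LinearMap.surjective_rangeRestrict _) k h
  exact hr ▸ h2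

end ring
section phase2
variable {R : Type} [Ring R]

theorem kdim_subsingleton {M : Type} [AddCommGroup M] [Module Rᵐᵒᵖ M] [Subsingleton M]
    (k : ℕ) : kdimLE R M k := by
  have : Subsingleton (Submodule Rᵐᵒᵖ M) :=
    ⟨fun S T => by ext x; simp [Subsingleton.elim x (0 : M)]⟩
  exact devLE_of_subsingleton (A := Submodule Rᵐᵒᵖ M) k

theorem kdim_prod {M N : Type} [AddCommGroup M] [Module Rᵐᵒᵖ M] [AddCommGroup N]
    [Module Rᵐᵒᵖ N] (k : ℕ) (hM : kdimLE R M k) (hN : kdimLE R N k) :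
    kdimLE R (M × N) k := by
  refine kdim_ext (LinearMap.ker (LinearMap.snd Rᵐᵒᵖ M N)) k ?_ ?_
  · have hinj : Function.Injective ((LinearMap.fst Rᵐᵒᵖ M N).comp
        (LinearMap.ker (LinearMap.snd Rᵐᵒᵖ M N)).subtype) := by
      rintro ⟨x, hx⟩ ⟨y, hy⟩ h
      have h1 : x.1 = y.1 := h
      have h2 : x.2 = y.2 := by
        have hx' : x.2 = 0 := hx
        have hy' : y.2 = 0 := hy
        rw [hx', hy']
      exact Subtype.ext (Prod.ext h1 h2)
    exact kdim_of_injective _ hinj k hM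
  · have hsurj : Function.Surjective (LinearMap.snd Rᵐᵒᵖ M N) := fun y => ⟨(0, y), rfl⟩
    exact kdim_of_equiv ((LinearMap.snd Rᵐᵒᵖ M N).quotKerEquivOfSurjective hsurj).symm k hN

theorem kdim_quot_inf {Q P : Submodule Rᵐᵒᵖ R} (k : ℕ) (hQ : kdimLE R (R ⧸ Q) k)
    (hP : kdimLE R (R ⧸ P) k) : kdimLE R (R ⧸ (Q ⊓ P)) k := by
  have hprod := kdim_prod k hQ hP
  set f := (Q.mkQ).prod (P.mkQ) with hf
  have hker : LinearMap.ker f = Q ⊓ P := by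
    rw [hf, LinearMap.ker_prod, Submodule.ker_mkQ, Submodule.ker_mkQ]
  set g := Submodule.liftQ (Q ⊓ P) f (le_of_eq hker.symm) with hg
  have hginj : Function.Injective g := by
    rw [← LinearMap.ker_eq_bot, hg, Submodule.ker_liftQ, hker]
    rw [eq_bot_iff]
    rintro x ⟨y, hy, rfl⟩
    simpa [Submodule.Quotient.mk_eq_zero] using hy
  exact kdim_of_injective g hginj k hprod

theorem kdim_quot_ker {A : Submodule Rᵐᵒᵖ R} {u : R} (k : ℕ) (hu : u ∈ A)
    (hA : kdimLE R A k) : kdimLE R (R ⧸ LinearMap.ker (lmulHom R u)) k := by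
  have hle : LinearMap.range (lmulHom R u) ≤ A := by
    rintro x ⟨y, rfl⟩
    exact mul_right_mem hu y
  have h1 : kdimLE R (LinearMap.range (lmulHom R u)) k := kdim_of_le hle k hA
  exact kdim_of_equiv (lmulHom R u).quotKerEquivRange.symm k h1

/-- state for the stuck-phase construction -/
def P2St (R : Type) [Ring R] (d : ℕ) : Type :=
  {p : Submodule Rᵐᵒᵖ R × Submodule Rᵐᵒᵖ R //
    p.1 ≠ ⊥ ∧ kdimLE R p.1 d ∧ stuck p.1 ∧ p.1 ≤ p.2 ∧ kdimLE R (R ⧸ p.2) d}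

variable (hprime : ∀ a b : R, (∀ r : R, a * r * b = 0) → a = 0 ∨ b = 0) (d : ℕ)

noncomputable def p2u (s : P2St R d) : R := Classical.choose (exists_u hprime s.2.1)

theorem p2u_spec (s : P2St R d) :
    p2u hprime d s ∈ s.1.1 ∧ s.1.1.map (lmulHom R (p2u hprime d s)) ≠ ⊥ :=
  Classical.choose_spec (exists_u hprime s.2.1)

noncomputable def p2Q' (s : P2St R d) : Submodule Rᵐᵒᵖ R :=
  s.1.2 ⊓ LinearMap.ker (lmulHom R (p2u hprime d s))

theorem p2Q'_kdim (s : P2St R d) : kdimLE R (R ⧸ p2Q' hprime d s) d :=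
  kdim_quot_inf d s.2.2.2.2.2 (kdim_quot_ker d (p2u_spec hprime d s).1 s.2.2.1)

open Classical in
noncomputable def p2step (s : P2St R d) : P2St R d :=
  if h : ∃ p ∈ p2Q' hprime d s, s.1.1.map (lmulHom R p) ≠ ⊥ then
    ⟨(s.1.1.map (lmulHom R (Classical.choose h)), p2Q' hprime d s), by
      obtain ⟨hp1, hp2⟩ := Classical.choose_spec h
      refine ⟨hp2, kdim_map s.2.2.1 _, stuck_map s.2.2.2.1 _, ?_, p2Q'_kdim hprime d s⟩
      rintro x ⟨a, haA, rfl⟩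
      exact mul_right_mem hp1 a⟩
  else s

noncomputable def p2seq (s₀ : P2St R d) : ℕ → P2St R d :=
  fun j => (p2step hprime d)^[j] s₀

theorem p2seq_succ (s₀ : P2St R d) (j : ℕ) :
    p2seq hprime d s₀ (j + 1) = p2step hprime d (p2seq hprime d s₀ j) :=
  Function.iterate_succ_apply' _ _ _

theorem phase2 [IsNoetherian Rᵐᵒᵖ R] (hpr : ∀ a b : R, (∀ r : R, a * r * b = 0) → a = 0 ∨ b = 0) (hR : ¬ kdimLE R R d)
    {A₀ : Submodule Rᵐᵒᵖ R} (h0 : A₀ ≠ ⊥) (hsm : kdimLE R A₀ d) (hst : stuck A₀) : False := by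
  have htopk : kdimLE R (R ⧸ (⊤ : Submodule Rᵐᵒᵖ R)) d := by
    have : Subsingleton (R ⧸ (⊤ : Submodule Rᵐᵒᵖ R)) :=
      Submodule.Quotient.subsingleton_iff.mpr rfl
    exact kdim_subsingleton d
  set s₀ : P2St R d := ⟨(A₀, ⊤), h0, hsm, hst, le_top, htopk⟩ with hs₀
  set sq := p2seq hpr d s₀ with hsq
  by_cases hstall : ∃ j, ¬ ∃ p ∈ p2Q' hpr d (sq j), (sq j).1.1.map (lmulHom R p) ≠ ⊥
  · obtain ⟨j, hj⟩ := hstall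
    by_cases hQ' : p2Q' hpr d (sq j) = ⊥
    · have : kdimLE R R d := by
        have h1 := p2Q'_kdim hpr d (sq j)
        rw [hQ'] at h1
        exact kdim_of_equiv (Submodule.quotEquivOfEqBot (⊥ : Submodule Rᵐᵒᵖ R) rfl) d h1
      exact hR this
    · exact hj (exists_p hpr (sq j).2.1 hQ')
  · push_neg at hstall
    -- abbreviations
    set A : ℕ → Submodule Rᵐᵒᵖ R := fun j => (sq j).1.1 with hA
    set u : ℕ → R := fun j => p2u hpr d (sq j) with hu
    set P : ℕ → Submodule Rᵐᵒᵖ R := fun j => LinearMap.ker (lmulHom R (u j)) with hP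
    set Q : ℕ → Submodule Rᵐᵒᵖ R := fun j => (sq j).1.2 with hQ
    have hstep : ∀ j, sq (j + 1) = p2step hpr d (sq j) := fun j => p2seq_succ hpr d s₀ j
    have hQsucc : ∀ j, Q (j + 1) = Q j ⊓ P j := by
      intro j
      have := hstep j
      simp only [p2step] at this
      replace this := this.trans (dif_pos (hstall j))
      have h2 : (sq (j+1)).1.2 = p2Q' hpr d (sq j) := by rw [this]
      exact h2
    have hAne : ∀ j, A j ≠ ⊥ := fun j => (sq j).2.1
    have hAQ : ∀ j, A j ≤ Q j := fun j => (sq j).2.2.2.2.1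
    have hAP : ∀ j, A j ⊓ P j = ⊥ := by
      intro j
      rw [inf_comm]
      exact (sq j).2.2.2.1 (u j) (p2u_spec hpr d (sq j)).2
    have hQP : ∀ i j, j < i → Q i ≤ P j := by
      intro i
      induction i with
      | zero => intro j hj; omega
      | succ i ih =>
        intro j hj
        rcases Nat.lt_succ_iff_lt_or_eq.mp hj with h | h
        · exact le_trans (le_trans (hQsucc i ▸ inf_le_left) (le_refl _)) (ih j h)
        · rw [h, hQsucc i]; exact inf_le_right
    have hAPlt : ∀ i j, j < i → A i ≤ P j := fun i j hj => le_trans (hAQ i) (hQP i j hj)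
    -- partial sups
    set T : ℕ → Submodule Rᵐᵒᵖ R := fun k => Nat.rec (A 0) (fun k Tk => Tk ⊔ A (k+1)) k with hT
    have hTsucc : ∀ k, T (k+1) = T k ⊔ A (k+1) := fun k => rfl
    have hTmono : Monotone T := monotone_nat_of_le_succ (fun k => by rw [hTsucc]; exact le_sup_left)
    have hkill : ∀ k x, x ∈ T k → (∀ i, i ≤ k → u i * x = 0) → x = 0 := by
      intro k
      induction k with
      | zero =>
        intro x hx hkills
        have : x ∈ A 0 ⊓ P 0 := ⟨hx, hkills 0 le_rfl⟩
        simpa [hAP 0] using this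
      | succ k ih =>
        intro x hx hkills
        rw [hTsucc] at hx
        obtain ⟨t, ht, a, haM, rfl⟩ := Submodule.mem_sup.mp hx
        have hkilla : ∀ i, i ≤ k → u i * a = 0 := fun i hi =>
          hAPlt (k+1) i (Nat.lt_succ_of_le hi) haM
        have hkillt : ∀ i, i ≤ k → u i * t = 0 := by
          intro i hi
          have h1 : u i * (t + a) = 0 := hkills i (Nat.le_succ_of_le hi)
          have h2 := hkilla i hi
          have : u i * t + u i * a = 0 := by rw [← mul_add]; exact h1
          linear_combination (norm := abel) this - h2
        have ht0 : t = 0 := ih t ht hkillt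
        have hka : u (k+1) * a = 0 := by
          have h1 := hkills (k+1) le_rfl
          rwa [ht0, zero_add] at h1
        have : a ∈ A (k+1) ⊓ P (k+1) := ⟨haM, hka⟩
        have ha0 : a = 0 := by simpa [hAP (k+1)] using this
        rw [ht0, ha0, add_zero]
    obtain ⟨k, hk⟩ := (monotone_stabilizes_iff_noetherian.mpr inferInstance) ⟨T, hTmono⟩
    have hTk : T (k+1) = T k := (hk (k+1) (Nat.le_succ k)).symm
    have hAsub : A (k+1) ≤ T k := by
      rw [← hTk, hTsucc]; exact le_sup_right
    have : A (k+1) = ⊥ := by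
      rw [eq_bot_iff]
      intro x hxA
      have hkills : ∀ i, i ≤ k → u i * x = 0 := fun i hi =>
        hAPlt (k+1) i (Nat.lt_succ_of_le hi) hxA
      simpa using hkill k x (hAsub hxA) hkills
    exact hAne (k+1) this
end phase2
section phase1
variable {R : Type} [Ring R]

def P1St (R : Type) [Ring R] (W : Submodule Rᵐᵒᵖ R) : Type :=
  {A : Submodule Rᵐᵒᵖ R // A ≠ ⊥ ∧ A ≤ W}

variable (d : ℕ) (W : Submodule Rᵐᵒᵖ R) (hWd : kdimLE R W d)
  (hun : ∀ A' : Submodule Rᵐᵒᵖ R, A' ≠ ⊥ → kdimLE R A' d →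
    ∃ v, A'.map (lmulHom R v) ≠ ⊥ ∧ LinearMap.ker (lmulHom R v) ⊓ A' ≠ ⊥)

noncomputable def p1v (s : P1St R W) : R :=
  Classical.choose (hun s.1 s.2.1 (kdim_of_le s.2.2 d hWd))

theorem p1v_spec (s : P1St R W) :
    s.1.map (lmulHom R (p1v d W hWd hun s)) ≠ ⊥ ∧
      LinearMap.ker (lmulHom R (p1v d W hWd hun s)) ⊓ s.1 ≠ ⊥ :=
  Classical.choose_spec (hun s.1 s.2.1 (kdim_of_le s.2.2 d hWd))

noncomputable def p1step (s : P1St R W) : P1St R W :=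
  ⟨LinearMap.ker (lmulHom R (p1v d W hWd hun s)) ⊓ s.1,
    (p1v_spec d W hWd hun s).2, le_trans inf_le_right s.2.2⟩

noncomputable def p1seq (s₀ : P1St R W) : ℕ → P1St R W :=
  fun j => (p1step d W hWd hun)^[j] s₀

theorem p1core (hWd : kdimLE R W d)
    (hun : ∀ A' : Submodule Rᵐᵒᵖ R, A' ≠ ⊥ → kdimLE R A' d →
      ∃ v, A'.map (lmulHom R v) ≠ ⊥ ∧ LinearMap.ker (lmulHom R v) ⊓ A' ≠ ⊥)
    (hWne : W ≠ ⊥)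
    (hcont : ∀ e, d = e + 1 →
      ∀ V : Submodule Rᵐᵒᵖ R, V ≠ ⊥ → kdimLE R V e → False) : False := by
  set s₀ : P1St R W := ⟨W, hWne, le_rfl⟩ with hs₀
  set sq := p1seq d W hWd hun s₀ with hsq
  set A : ℕ → Submodule Rᵐᵒᵖ R := fun j => (sq j).1 with hA
  set v : ℕ → R := fun j => p1v d W hWd hun (sq j) with hv
  have hstep : ∀ j, A (j + 1) = LinearMap.ker (lmulHom R (v j)) ⊓ A j := by
    intro j
    have h1 : sq (j+1) = p1step d W hWd hun (sq j) := Function.iterate_succ_apply' _ _ _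
    show (sq (j+1)).1 = LinearMap.ker (lmulHom R (p1v d W hWd hun (sq j))) ⊓ (sq j).1
    rw [h1]
    rfl
  have hAanti : ∀ j, A (j+1) ≤ A j := fun j => (hstep j) ▸ inf_le_right
  have hAW : ∀ j, A j ≤ W := fun j => (sq j).2.2
  set B : ℕ → Submodule Rᵐᵒᵖ W := fun j => Submodule.comap W.subtype (A j) with hB
  have hBanti : Antitone B := antitone_nat_of_succ_le (fun j => Submodule.comap_mono (hAanti j))
  have hBstrict : ∀ j, B (j+1) ≠ B j := by
    intro j heq
    have hmap : A (j+1) = A j := by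
      have h1 := congrArg (Submodule.map W.subtype) heq
      rw [Submodule.map_comap_subtype, Submodule.map_comap_subtype] at h1
      rwa [inf_eq_right.mpr (hAW (j+1)), inf_eq_right.mpr (hAW j)] at h1
    have hle : A j ≤ LinearMap.ker (lmulHom R (v j)) := by
      intro x hx
      have : x ∈ A (j+1) := hmap ▸ hx
      rw [hstep j] at this
      exact this.1
    obtain ⟨x, hxA, hvx⟩ := map_lmul_ne_bot_iff.mp (p1v_spec d W hWd hun (sq j)).1
    exact hvx (hle hxA)
  rcases d with _ | e
  · obtain ⟨N, hN⟩ := hWd B hBanti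
    exact hBstrict N (hN N le_rfl)
  · obtain ⟨N, hN⟩ := hWd B hBanti
    have dIcc : devLE e (Set.Icc (B (N+1)) (B N)) := hN N le_rfl
    set V : Submodule Rᵐᵒᵖ R := (A N).map (lmulHom R (v N)) with hV
    have hVne : V ≠ ⊥ := (p1v_spec (e+1) W hWd hun (sq N)).1
    -- transfer devLE from the interval to Submodule V
    set g : Submodule Rᵐᵒᵖ V → Set.Icc (B (N+1)) (B N) := fun S =>
      ⟨Submodule.comap W.subtype (A N ⊓ Submodule.comap (lmulHom R (v N))
        (Submodule.map V.subtype S)), by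
          constructor
          · intro x hx
            have hx' : (x : R) ∈ LinearMap.ker (lmulHom R (v N)) ⊓ A N := by
              rw [← hstep N]; exact hx
            refine ⟨hx'.2, ?_⟩
            have h0 : v N * (x : R) = 0 := hx'.1
            show lmulHom R (v N) (x : R) ∈ Submodule.map V.subtype S
            rw [show lmulHom R (v N) (x : R) = 0 from h0]
            exact Submodule.zero_mem _
          · intro x hx
            exact hx.1⟩ with hg
    have gmono : Monotone g := by
      intro S T hST
      show (g S).1 ≤ (g T).1
      exact Submodule.comap_mono (inf_le_inf_left _ (Submodule.comap_mono
        (Submodule.map_mono hST)))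
    have gle : ∀ S T : Submodule Rᵐᵒᵖ V, (g S).1 ≤ (g T).1 → S ≤ T := by
      intro S T hST y hyS
      obtain ⟨a, haA, hva⟩ := Submodule.mem_map.mp
        (show (y : R) ∈ (A N).map (lmulHom R (v N)) from y.2)
      have haW : a ∈ W := hAW N haA
      have hmem : (⟨a, haW⟩ : W) ∈ (g S).1 := by
        refine ⟨haA, ?_⟩
        show lmulHom R (v N) a ∈ Submodule.map V.subtype S
        rw [show (lmulHom R (v N)) a = (V.subtype) y from hva]
        exact Submodule.mem_map_of_mem hyS
      have hmem2 := hST hmem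
      obtain ⟨haA', hmap⟩ := hmem2
      obtain ⟨y', hy'T, hy'⟩ := hmap
      have : y' = y := Subtype.ext (by
        have : (V.subtype) y' = lmulHom R (v N) a := hy'
        rw [hva] at this
        exact this)
      exact this ▸ hy'T
    have kdimV : kdimLE R V e := by
      refine devLE_transfer e g gmono (fun S T hST heq =>
        le_antisymm hST (gle T S (le_of_eq (congrArg Subtype.val heq.symm)))) dIcc
    exact hcont e rfl V hVne kdimV
end phase1
section main
variable {R : Type} [Ring R]

theorem Smain [IsNoetherian Rᵐᵒᵖ R]
    (hpr : ∀ a b : R, (∀ r : R, a * r * b = 0) → a = 0 ∨ b = 0) :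
    ∀ d, ¬ kdimLE R R d → ∀ A : Submodule Rᵐᵒᵖ R, kdimLE R A d → A = ⊥ := by
  intro d
  induction d with
  | zero =>
    intro hR A hA
    by_contra hAne
    by_cases hst : ∃ A' : Submodule Rᵐᵒᵖ R, A' ≠ ⊥ ∧ kdimLE R A' 0 ∧ stuck A'
    · obtain ⟨A', h1, h2, h3⟩ := hst
      exact phase2 0 hpr hR h1 h2 h3
    · push_neg at hst
      refine p1core 0 A hA ?_ hAne (fun e he => by omega)
      intro A' h1 h2
      have h3 := hst A' h1 h2
      simp only [stuck] at h3
      push_neg at h3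
      exact h3
  | succ e ih =>
    intro hR A hA
    by_contra hAne
    have hR' : ¬ kdimLE R R e := fun h => hR (devLE_succ e h)
    by_cases hst : ∃ A' : Submodule Rᵐᵒᵖ R, A' ≠ ⊥ ∧ kdimLE R A' (e+1) ∧ stuck A'
    · obtain ⟨A', h1, h2, h3⟩ := hst
      exact phase2 (e+1) hpr hR h1 h2 h3
    · push_neg at hst
      refine p1core (e+1) A hA ?_ hAne ?_
      · intro A' h1 h2
        have h3 := hst A' h1 h2
        simp only [stuck] at h3
        push_neg at h3
        exact h3
      · intro e' he' V hVne kV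
        have he : e' = e := by omega
        exact hVne (ih hR' V (he ▸ kV))

theorem span_singleton_eq_range (c : R) :
    Submodule.span Rᵐᵒᵖ ({c} : Set R) = LinearMap.range (lmulHom R c) := by
  apply le_antisymm
  · rw [Submodule.span_le, Set.singleton_subset_iff]
    exact ⟨1, mul_one c⟩
  · rintro x ⟨z, rfl⟩
    have : (lmulHom R c) z = MulOpposite.op z • c := by
      simp only [MulOpposite.smul_eq_mul_unop, MulOpposite.unop_op, lmulHom_apply]
    rw [this]
    exact Submodule.smul_mem _ _ (Submodule.mem_span_singleton_self c)

theorem kdim_quot_range_of_le {c u : R} {k : ℕ}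
    (hc : kdimLE R (R ⧸ Submodule.span Rᵐᵒᵖ ({c} : Set R)) k)
    (hcu : LinearMap.range (lmulHom R c) ≤ LinearMap.ker (lmulHom R u)) :
    kdimLE R (LinearMap.range (lmulHom R u)) k := by
  have hsp : Submodule.span Rᵐᵒᵖ ({c} : Set R) ≤ LinearMap.ker (lmulHom R u) := by
    rw [span_singleton_eq_range]; exact hcu
  have hsurj : Function.Surjective
      (Submodule.mapQ (Submodule.span Rᵐᵒᵖ ({c} : Set R)) (LinearMap.ker (lmulHom R u))
        LinearMap.id hsp) := by
    intro y
    obtain ⟨z, rfl⟩ := Submodule.mkQ_surjective _ y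
    exact ⟨Submodule.mkQ _ z, by simp [Submodule.mkQ_apply, Submodule.mapQ_apply]⟩
  have k1 := kdim_of_surjective _ hsurj k hc
  exact kdim_of_equiv (lmulHom R u).quotKerEquivRange k k1

theorem stmt1 (R : Type) [Ring R] [Nontrivial R] [IsNoetherian Rᵐᵒᵖ R]
    (hprime : ∀ a b : R, (∀ r : R, a * r * b = 0) → a = 0 ∨ b = 0)
    (n m : ℕ) (hm : 0 < m) (hmn : m < n)
    (hdim : kdimLE R R n ∧ ¬ kdimLE R R (n - 1)) :
    ∀ c ∈ rCm R m, regElem R c := by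
  intro c hc
  have hm1 : ¬ kdimLE R R (m - 1) := fun h =>
    hdim.2 (devLE_mono (by omega : m - 1 ≤ n - 1) h)
  have hcq : kdimLE R (R ⧸ Submodule.span Rᵐᵒᵖ ({c} : Set R)) (m - 1) := hc
  -- the key: quotients by powers of c stay small
  have kQk : ∀ k : ℕ, kdimLE R (R ⧸ LinearMap.range (lmulHom R (c ^ k))) (m - 1) := by
    intro k
    induction k with
    | zero =>
      have htop : LinearMap.range (lmulHom R (c ^ 0)) = ⊤ := by
        rw [eq_top_iff]
        intro x _
        exact ⟨x, by show c ^ 0 * x = x; rw [pow_zero, one_mul]⟩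
      rw [htop]
      have : Subsingleton (R ⧸ (⊤ : Submodule Rᵐᵒᵖ R)) :=
        Submodule.Quotient.subsingleton_iff.mpr rfl
      exact kdim_subsingleton (m - 1)
    | succ k ihk =>
      set N1 := LinearMap.range (lmulHom R (c ^ (k+1))) with hN1
      set N2 := LinearMap.range (lmulHom R (c ^ k)) with hN2
      have hN12 : N1 ≤ N2 := by
        rintro x ⟨z, rfl⟩
        exact ⟨c * z, by show c ^ k * (c * z) = c ^ (k+1) * z; rw [← mul_assoc, ← pow_succ]⟩
      set S : Submodule Rᵐᵒᵖ (R ⧸ N1) := N2.map N1.mkQ with hS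
      refine kdim_ext S (m - 1) ?_ ?_
      · -- S has small Kdim : it is an image of R/cR
        set ψ : R →ₗ[Rᵐᵒᵖ] R ⧸ N1 := (N1.mkQ).comp (lmulHom R (c ^ k)) with hψ
        have hrange : LinearMap.range ψ = S := by
          rw [hψ, LinearMap.range_comp, hN2.symm]
        have hker : LinearMap.range (lmulHom R c) ≤ LinearMap.ker ψ := by
          rintro x ⟨z, rfl⟩
          show N1.mkQ (c ^ k * (c * z)) = 0
          rw [Submodule.mkQ_apply, Submodule.Quotient.mk_eq_zero]
          exact ⟨z, by show c ^ (k+1) * z = c ^ k * (c * z); rw [← mul_assoc, ← pow_succ]⟩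
        have hsp : Submodule.span Rᵐᵒᵖ ({c} : Set R) ≤ LinearMap.ker ψ := by
          rw [span_singleton_eq_range]; exact hker
        have hsurj : Function.Surjective
            (Submodule.mapQ (Submodule.span Rᵐᵒᵖ ({c} : Set R)) (LinearMap.ker ψ)
              LinearMap.id hsp) := by
          intro y
          obtain ⟨z, rfl⟩ := Submodule.mkQ_surjective _ y
          exact ⟨Submodule.mkQ _ z, by simp [Submodule.mkQ_apply, Submodule.mapQ_apply]⟩
        have k1 := kdim_of_surjective _ hsurj (m-1) hcq
        have k2 := kdim_of_equiv ψ.quotKerEquivRange (m-1) k1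
        exact hrange ▸ k2
      · -- the quotient (R/N1)/S ≃ R/N2 has small Kdim by induction
        set φ : (R ⧸ N1) →ₗ[Rᵐᵒᵖ] (R ⧸ N2) := Submodule.mapQ N1 N2 LinearMap.id hN12 with hφ
        have hφsurj : Function.Surjective φ := by
          intro y
          obtain ⟨z, rfl⟩ := Submodule.mkQ_surjective _ y
          exact ⟨Submodule.mkQ _ z, by simp [hφ, Submodule.mkQ_apply, Submodule.mapQ_apply]⟩
        have hφker : LinearMap.ker φ = S := by
          apply le_antisymm
          · intro y hy
            obtain ⟨z, rfl⟩ := Submodule.mkQ_surjective _ y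
            have : φ (N1.mkQ z) = N2.mkQ z := by simp [hφ, Submodule.mkQ_apply, Submodule.mapQ_apply]
            rw [LinearMap.mem_ker, this, Submodule.mkQ_apply,
              Submodule.Quotient.mk_eq_zero] at hy
            exact Submodule.mem_map_of_mem hy
          · rintro y ⟨w, hwN2, rfl⟩
            rw [LinearMap.mem_ker]
            have : φ (N1.mkQ w) = N2.mkQ w := by simp [hφ, Submodule.mkQ_apply, Submodule.mapQ_apply]
            rw [this, Submodule.mkQ_apply, Submodule.Quotient.mk_eq_zero]
            exact hwN2
        have := kdim_of_equiv (φ.quotKerEquivOfSurjective hφsurj).symm (m-1) ihk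
        exact hφker ▸ this
  constructor
  · -- right annihilator of c is zero
    intro x hx
    -- Fitting
    have hmono : Monotone (fun j => LinearMap.ker (lmulHom R (c ^ j))) := by
      apply monotone_nat_of_le_succ
      intro j y hy
      have hy' : c ^ j * y = 0 := hy
      show c ^ (j+1) * y = 0
      rw [pow_succ', mul_assoc, hy', mul_zero]
    obtain ⟨k, hk⟩ := (monotone_stabilizes_iff_noetherian.mpr inferInstance)
      ⟨fun j => LinearMap.ker (lmulHom R (c ^ j)), hmono⟩
    have hkk : LinearMap.ker (lmulHom R (c ^ k)) = LinearMap.ker (lmulHom R (c ^ (k+1))) :=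
      hk (k+1) (Nat.le_succ k)
    have hdisj : LinearMap.ker (lmulHom R c) ⊓ LinearMap.range (lmulHom R (c ^ k)) = ⊥ := by
      rw [eq_bot_iff]
      rintro y ⟨hyk, z, rfl⟩
      have h1 : c * (c ^ k * z) = 0 := hyk
      have h2 : c ^ (k+1) * z = 0 := by rw [pow_succ', mul_assoc]; exact h1
      have h3 : z ∈ LinearMap.ker (lmulHom R (c ^ k)) := hkk ▸ h2
      have h4 : c ^ k * z = 0 := h3
      show (lmulHom R (c ^ k)) z ∈ (⊥ : Submodule Rᵐᵒᵖ R)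
      rw [Submodule.mem_bot]
      exact h4
    set g := ((LinearMap.range (lmulHom R (c ^ k))).mkQ).comp
      (LinearMap.ker (lmulHom R c)).subtype with hg
    have hginj : Function.Injective g := by
      rw [← LinearMap.ker_eq_bot, hg, LinearMap.ker_comp, eq_bot_iff]
      intro y hy
      have h1 : (y : R) ∈ LinearMap.range (lmulHom R (c ^ k)) := by
        have := hy
        rwa [Submodule.mem_comap, Submodule.ker_mkQ] at this
      have h2 : (y : R) ∈ LinearMap.ker (lmulHom R c) ⊓ LinearMap.range (lmulHom R (c ^ k)) :=
        ⟨y.2, h1⟩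
      rw [hdisj] at h2
      exact Subtype.ext h2
    have kA : kdimLE R (LinearMap.ker (lmulHom R c)) (m-1) :=
      kdim_of_injective g hginj (m-1) (kQk k)
    have hbot := Smain hprime (m-1) hm1 _ kA
    have : x ∈ LinearMap.ker (lmulHom R c) := hx
    rw [hbot] at this
    exact this
  · -- left annihilator of c is zero
    intro x hx
    by_contra hxne
    have hcu : LinearMap.range (lmulHom R c) ≤ LinearMap.ker (lmulHom R x) := by
      rintro y ⟨z, rfl⟩
      show x * (c * z) = 0
      rw [← mul_assoc, hx, zero_mul]
    have kX : kdimLE R (LinearMap.range (lmulHom R x)) (m-1) :=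
      kdim_quot_range_of_le hcq hcu
    have hbot := Smain hprime (m-1) hm1 _ kX
    have hxmem : x ∈ LinearMap.range (lmulHom R x) := ⟨1, mul_one x⟩
    rw [hbot] at hxmem
    exact hxne hxmem
end main
end

section
/- For q ∈ Q, one has q ∈ R^e if and only if Kdim(q'R) < m, where q' = q + R ∈ Q/R and q'R is the cyclic R-submodule of Q/R generated by q'. That is, R^e = {q ∈ Q : Kdim((qR + R)/R) < m}. -/
set_option linter.unusedVariables false

theorem devLE_of_map (k : ℕ) : ∀ {A B : Type*} [Preorder A] [Preorder B]
    (g : B → A), Monotone g → Function.Injective g → devLE k A → devLE k B := by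
  induction k with
  | zero =>
    intro A B _ _ g hmono hinj h f hf
    obtain ⟨N, hN⟩ := h (g ∘ f) (fun i j hij => hmono (hf hij))
    exact ⟨N, fun i hi' => hinj (hN i hi')⟩
  | succ k ih =>
    intro A B _ _ g hmono hinj h f hf
    obtain ⟨N, hN⟩ := h (g ∘ f) (fun i j hij => hmono (hf hij))
    refine ⟨N, fun i hi' => ?_⟩
    exact ih
      (fun x => (⟨g x.1, hmono x.2.1, hmono x.2.2⟩ :
        Set.Icc ((g ∘ f) (i+1)) ((g ∘ f) i)))
      (fun a b hab => hmono hab)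
      (fun a b hab => Subtype.ext (hinj (congrArg Subtype.val hab)))
      (hN i hi')

theorem devLE_of_surjective {S M N : Type*} [Ring S] [AddCommGroup M] [Module S M]
    [AddCommGroup N] [Module S N] (φ : M →ₗ[S] N) (hs : Function.Surjective φ)
    (k : ℕ) (h : devLE k (Submodule S M)) : devLE k (Submodule S N) :=
  devLE_of_map k (Submodule.comap φ) (fun _ _ hab => Submodule.comap_mono hab)
    (Submodule.comap_injective_of_surjective hs) h

theorem stmt8 (R : Type) [Ring R] [Nontrivial R] [IsNoetherian Rᵐᵒᵖ R]
    (hprime : ∀ a b : R, (∀ r : R, a * r * b = 0) → a = 0 ∨ b = 0)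
    (n m : ℕ) (hm : 0 < m) (hmn : m < n)
    (hdim : kdimLE R R n ∧ ¬ kdimLE R R (n - 1))
    (Q : Type) [Ring Q] (f : R →+* Q) (hQ : isRightQuotientRing R Q f) :
    letI : Module Rᵐᵒᵖ Q := qMod R Q f
    ∀ q : Q, q ∈ reSet R Q f m ↔
      kdimLE R ↥(Submodule.span Rᵐᵒᵖ
        {(Submodule.Quotient.mk q : Q ⧸ Submodule.span Rᵐᵒᵖ (Set.range f))}) (m - 1) := by
  letI : Module Rᵐᵒᵖ Q := qMod R Q f
  intro q
  have hsmul : ∀ (r : R) (x : Q), (MulOpposite.op r) • x = x * f r := fun r x => rfl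
  have hsmul' : ∀ (s : Rᵐᵒᵖ) (x : Q), s • x = x * f s.unop := fun s x => rfl
  -- the image of R in Q as a submodule
  let Rsub : Submodule Rᵐᵒᵖ Q :=
    { carrier := Set.range f
      add_mem' := by rintro _ _ ⟨a, rfl⟩ ⟨b, rfl⟩; exact ⟨a + b, map_add f a b⟩
      zero_mem' := ⟨0, map_zero f⟩
      smul_mem' := by
        rintro r _ ⟨a, rfl⟩
        exact ⟨a * r.unop, by rw [map_mul, ← hsmul' r (f a)]⟩ }
  have hRR : Submodule.span Rᵐᵒᵖ (Set.range f) = Rsub := Submodule.span_eq Rsub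
  -- the map r ↦ (q * f r mod R)
  let φ : R →ₗ[Rᵐᵒᵖ] (Q ⧸ Submodule.span Rᵐᵒᵖ (Set.range f)) :=
    { toFun := fun r => Submodule.Quotient.mk (q * f r)
      map_add' := by intro a b; simp only [map_add, mul_add, Submodule.Quotient.mk_add]
      map_smul' := by
        intro s r
        show Submodule.Quotient.mk (q * f (r * s.unop)) =
          s • Submodule.Quotient.mk (q * f r)
        rw [← Submodule.Quotient.mk_smul, hsmul' s, map_mul, mul_assoc] }
  have hker : ∀ r : R, r ∈ LinearMap.ker φ ↔ ∃ r' : R, q * f r = f r' := by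
    intro r
    rw [LinearMap.mem_ker]
    show Submodule.Quotient.mk (q * f r) = 0 ↔ _
    rw [Submodule.Quotient.mk_eq_zero, hRR]
    exact ⟨fun ⟨r', h⟩ => ⟨r', h.symm⟩, fun ⟨r', h⟩ => ⟨r', h.symm⟩⟩
  have hrange : LinearMap.range φ = Submodule.span Rᵐᵒᵖ
      {(Submodule.Quotient.mk q : Q ⧸ Submodule.span Rᵐᵒᵖ (Set.range f))} := by
    ext x
    rw [LinearMap.mem_range, Submodule.mem_span_singleton]
    constructor
    · rintro ⟨r, rfl⟩
      refine ⟨MulOpposite.op r, ?_⟩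
      show MulOpposite.op r • Submodule.Quotient.mk q = Submodule.Quotient.mk (q * f r)
      rw [← Submodule.Quotient.mk_smul, hsmul]
    · rintro ⟨s, rfl⟩
      refine ⟨s.unop, ?_⟩
      show Submodule.Quotient.mk (q * f s.unop) = s • Submodule.Quotient.mk q
      rw [← Submodule.Quotient.mk_smul, hsmul' s]
  -- kdim of the cyclic module equals kdim of R / ker φ
  have e := φ.quotKerEquivRange
  have key : kdimLE R (R ⧸ LinearMap.ker φ) (m - 1) ↔
      kdimLE R ↥(Submodule.span Rᵐᵒᵖ
        {(Submodule.Quotient.mk q : Q ⧸ Submodule.span Rᵐᵒᵖ (Set.range f))}) (m - 1) := by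
    rw [← hrange]
    constructor
    · exact devLE_of_surjective e.toLinearMap e.surjective (m - 1)
    · exact devLE_of_surjective e.symm.toLinearMap e.symm.surjective (m - 1)
  constructor
  · rintro ⟨J, hJ, hJ2⟩
    rw [← key]
    have hle : J ≤ LinearMap.ker φ := by
      intro j hj
      exact (hker j).mpr (hJ2 j hj)
    have hsurj : Function.Surjective (Submodule.mapQ J (LinearMap.ker φ) LinearMap.id hle) := by
      intro x
      obtain ⟨y, rfl⟩ := Submodule.Quotient.mk_surjective _ x
      exact ⟨Submodule.Quotient.mk y, by rw [Submodule.mapQ_apply]; rfl⟩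
    exact devLE_of_surjective _ hsurj (m - 1) hJ
  · intro hk
    refine ⟨LinearMap.ker φ, ?_, fun j hj => (hker j).mp hj⟩
    rw [gFilt, Set.mem_setOf_eq]
    exact key.mpr hk
end

section
/- If u ∈ R is a unit of R^e, then Kdim(R/uR) < m, i.e., u ∈ C_m. -/
set_option linter.unusedVariables false

/-- Order embedding between closed intervals induced by an order embedding. -/
def iccEmb {A B : Type*} [Preorder A] [Preorder B] (e : A ↪o B) (a b : A) :
    Set.Icc a b ↪o Set.Icc (e a) (e b) where
  toFun x := ⟨e x, e.monotone x.2.1, e.monotone x.2.2⟩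
  inj' x y h := Subtype.ext (e.injective (congrArg Subtype.val h))
  map_rel_iff' := by
    intro x y
    exact e.map_rel_iff

/-- `devLE` is inherited along order embeddings. -/
theorem devLE_of_embedding : ∀ (k : ℕ) {A B : Type*} [Preorder A] [Preorder B]
    (e : A ↪o B), devLE k B → devLE k A
  | 0, A, B, _, _, e, h => fun f hf => by
      obtain ⟨N, hN⟩ := h (e ∘ f) (e.monotone.comp_antitone hf)
      exact ⟨N, fun i hi => e.injective (hN i hi)⟩
  | (k+1), A, B, _, _, e, h => fun f hf => by
      obtain ⟨N, hN⟩ := h (e ∘ f) (e.monotone.comp_antitone hf)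
      refine ⟨N, fun i hi => ?_⟩
      exact devLE_of_embedding k (iccEmb e _ _) (hN i hi)

theorem stmt12 (R : Type) [Ring R] [Nontrivial R] [IsNoetherian Rᵐᵒᵖ R]
    (hprime : ∀ a b : R, (∀ r : R, a * r * b = 0) → a = 0 ∨ b = 0)
    (n m : ℕ) (hm : 0 < m) (hmn : m < n)
    (hdim : kdimLE R R n ∧ ¬ kdimLE R R (n - 1))
    (Q : Type) [Ring Q] (f : R →+* Q) (hQ : isRightQuotientRing R Q f) :
    ∀ u : R, (∃ q ∈ reSet R Q f m, f u * q = 1 ∧ q * f u = 1) → u ∈ rCm R m := by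
  rintro u ⟨q, ⟨J, hJ, hJq⟩, huq, hqu⟩
  set I := Submodule.span Rᵐᵒᵖ ({u} : Set R) with hI
  have hJI : J ≤ I := by
    intro j hj
    obtain ⟨r, hr⟩ := hJq j hj
    have hfj : f j = f (u * r) := by
      calc f j = (f u * q) * f j := by rw [huq, one_mul]
      _ = f u * (q * f j) := by rw [mul_assoc]
      _ = f u * f r := by rw [hr]
      _ = f (u * r) := (f.map_mul u r).symm
    have hjr : j = u * r := hQ.1 hfj
    rw [hjr]
    have hmem : (MulOpposite.op r) • u ∈ I :=
      Submodule.smul_mem _ _ (Submodule.mem_span_singleton_self u)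
    simpa using hmem
  let π : (R ⧸ J) →ₗ[Rᵐᵒᵖ] (R ⧸ I) := Submodule.mapQ J I LinearMap.id hJI
  have hπ : Function.Surjective π := by
    intro x
    obtain ⟨y, rfl⟩ := Submodule.mkQ_surjective I x
    exact ⟨Submodule.mkQ J y, by simp [π, Submodule.mapQ_apply]⟩
  have e : Submodule Rᵐᵒᵖ (R ⧸ I) ↪o Submodule Rᵐᵒᵖ (R ⧸ J) :=
    OrderEmbedding.ofMapLEIff (Submodule.comap π) (fun S T => by
      constructor
      · intro h
        have h2 := Submodule.map_mono (f := π) h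
        rwa [Submodule.map_comap_eq_of_surjective hπ,
          Submodule.map_comap_eq_of_surjective hπ] at h2
      · exact fun h => Submodule.comap_mono h)
  exact devLE_of_embedding (m-1) e hJ
end
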